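/- Let Z = L_ξ + R_η with ξ, η ∈ Im ℍ, viewed as a skew-symmetric endomorphism of ℍ ≅ ℝ⁴. If Z² = -λ²·I₄ for some real λ ≠ 0, then ξ = 0 or η = 0. -/

import Mathlib

open Quaternion
open scoped Quaternion

/-- Let `Z = L_ξ + R_η` with `ξ, η ∈ Im ℍ`, a skew-symmetric endomorphism of `ℍ ≅ ℝ⁴`.
If `Z² = -λ² • I₄` for some real `λ ≠ 0`, then `ξ = 0` or `η = 0`. -/
theorem square_scalar_implies_one_side_zero (ξ η : ℍ[ℝ]) (hξ : ξ.re = 0) (hη : η.re = 0)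
    (lam : ℝ) (hlam : lam ≠ 0)
    (h : ∀ x : ℍ[ℝ], ξ * (ξ * x + x * η) + (ξ * x + x * η) * η = -(lam ^ 2) • x) :
    ξ = 0 ∨ η = 0 := by
  set A : ℝ := Quaternion.normSq ξ with hA
  set B : ℝ := Quaternion.normSq η with hB
  have hsqξ : ξ * ξ = -((A : ℝ) : ℍ[ℝ]) := by
    apply Quaternion.ext <;>
      simp [Quaternion.re_mul, Quaternion.imI_mul, Quaternion.imJ_mul, Quaternion.imK_mul,
        hA, Quaternion.normSq_def, hξ] <;> ring
  have hsqη : η * η = -((B : ℝ) : ℍ[ℝ]) := by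
    apply Quaternion.ext <;>
      simp [Quaternion.re_mul, Quaternion.imI_mul, Quaternion.imJ_mul, Quaternion.imK_mul,
        hB, Quaternion.normSq_def, hη] <;> ring
  set c : ℝ := A + B - lam ^ 2 with hc
  -- key identity: 2 ξ x η = c x
  have key : ∀ x : ℍ[ℝ], ξ * x * η + ξ * x * η = ((c : ℝ) : ℍ[ℝ]) * x := by
    intro x
    have hx := h x
    have e1 : ξ * (ξ * x + x * η) + (ξ * x + x * η) * η
        = -((A : ℝ) : ℍ[ℝ]) * x + (ξ * x * η + ξ * x * η) + x * -((B : ℝ) : ℍ[ℝ]) := by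
      rw [mul_add, add_mul, ← mul_assoc, hsqξ, mul_assoc x η η, hsqη, mul_assoc]
      abel
    rw [e1] at hx
    have hs : -(lam ^ 2) • x = ((-(lam ^ 2) : ℝ) : ℍ[ℝ]) * x := by
      rw [Quaternion.coe_mul_eq_smul]
    rw [hs] at hx
    have e2 : ξ * x * η + ξ * x * η
        = ((-(lam ^ 2) : ℝ) : ℍ[ℝ]) * x + ((A : ℝ) : ℍ[ℝ]) * x + x * ((B : ℝ) : ℍ[ℝ]) := by
      rw [← hx]; noncomm_ring
    rw [e2, ← Quaternion.coe_commutes B x, ← add_mul, ← add_mul]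
    congr 1
    push_cast [hc]
    noncomm_ring
  by_cases hξ0 : ξ = 0
  · exact Or.inl hξ0
  by_cases hη0 : η = 0
  · exact Or.inr hη0
  exfalso
  have hA0 : A ≠ 0 := by simpa [hA, Quaternion.normSq_eq_zero] using hξ0
  have key2 : ∀ x : ℍ[ℝ], ((c : ℝ) : ℍ[ℝ]) * (ξ * x)
      = -(((A : ℝ) : ℍ[ℝ]) * (x * η) + ((A : ℝ) : ℍ[ℝ]) * (x * η)) := by
    intro x
    have hk := key (ξ * x)
    have e : ξ * (ξ * x) * η = -(((A : ℝ) : ℍ[ℝ]) * (x * η)) := by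
      rw [← mul_assoc, ← mul_assoc, hsqξ]; noncomm_ring
    rw [e] at hk
    rw [← hk]; abel
  by_cases hc0 : c = 0
  · have hk1 := key 1
    rw [hc0] at hk1
    simp only [mul_one, one_mul, Quaternion.coe_zero, zero_mul] at hk1
    have h2 : ((2 : ℝ) : ℍ[ℝ]) * (ξ * η) = 0 := by rw [Quaternion.coe_mul_eq_smul, two_smul]; exact hk1
    have h2ne : ((2 : ℝ) : ℍ[ℝ]) ≠ 0 := fun hh =>
      two_ne_zero (by simpa using congrArg QuaternionAlgebra.re hh)
    have h0 : ξ * η = 0 := (mul_eq_zero.mp h2).resolve_left h2ne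
    rcases mul_eq_zero.mp h0 with h' | h'
    · exact hξ0 h'
    · exact hη0 h'
  · have hcne : ((c : ℝ) : ℍ[ℝ]) ≠ 0 := fun hh => hc0 (Quaternion.coe_injective (by simpa using hh))
    have hcen : ∀ x : ℍ[ℝ], ξ * x = x * ξ := by
      intro x
      have h1 := key2 1
      have hx := key2 x
      simp only [mul_one, one_mul] at h1
      have e2 : ((c : ℝ) : ℍ[ℝ]) * (ξ * x) = ((c : ℝ) : ℍ[ℝ]) * (x * ξ) := by
        rw [hx]
        calc -(((A : ℝ) : ℍ[ℝ]) * (x * η) + ((A : ℝ) : ℍ[ℝ]) * (x * η))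
            = x * -(((A : ℝ) : ℍ[ℝ]) * η + ((A : ℝ) : ℍ[ℝ]) * η) := by
              rw [← mul_assoc, Quaternion.coe_commutes A x, mul_assoc]; noncomm_ring
          _ = x * (((c : ℝ) : ℍ[ℝ]) * ξ) := by rw [h1]
          _ = ((c : ℝ) : ℍ[ℝ]) * (x * ξ) := by
              rw [← mul_assoc, ← Quaternion.coe_commutes c x, mul_assoc]
      exact mul_left_cancel₀ hcne e2
    have hi := hcen ⟨0, 1, 0, 0⟩
    have hj := hcen ⟨0, 0, 1, 0⟩
    rw [Quaternion.ext_iff] at hi hj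
    erw [Quaternion.re_mul, Quaternion.re_mul, Quaternion.imI_mul, Quaternion.imI_mul,
      Quaternion.imJ_mul, Quaternion.imJ_mul, Quaternion.imK_mul, Quaternion.imK_mul] at hi hj
    simp only [Quaternion.re_mul, Quaternion.imI_mul, Quaternion.imJ_mul, Quaternion.imK_mul,
      one_mul, mul_one, mul_zero, zero_mul, sub_zero, add_zero, zero_add, zero_sub,
      neg_zero] at hi hj
    apply hξ0
    apply Quaternion.ext
    · exact hξ
    · show ξ.imI = (0 : ℍ[ℝ]).imI
      rw [Quaternion.imI_zero]
      linarith [hj.2.2.2]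
    · show ξ.imJ = (0 : ℍ[ℝ]).imJ
      rw [Quaternion.imJ_zero]
      linarith [hi.2.2.2]
    · show ξ.imK = (0 : ℍ[ℝ]).imK
      rw [Quaternion.imK_zero]
      linarith [hi.2.2.1]
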